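/- Soundness of the MIC-extraction encoding: Let (V,E,σ) be an influence graph with a designated set of input vertices and μ : V → {+,−} a partial vertex labeling. If X is an answer set of the disjunctive logic program P_D ∪ τ((V,E,σ),μ), then the set { i ∈ V | active(i) ∈ X } is a Minimal Inconsistent Core. -/

import Mathlib

/-- Sign multiplication: `true` stands for `+` and `false` for `−`
(`+·+ = −·− = +`, `+·− = −·+ = −`). -/
def signMul (a b : Bool) : Bool := a == b

/-- `σ'` and `μ'` are witnessing labelings for `W` in the influence graph with
vertex type `V`, edges `E`, partial edge labeling `σ`, partial vertex labeling `μ`,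
and input vertices `I`: they are total, extend `σ` and `μ`, and for every
non-input vertex `i ∈ W` there is an edge `(j, i) ∈ E` with
`μ' i = μ' j · σ' (j, i)`. -/
def Witnessing {V : Type} (E : Set (V × V)) (σ : V × V → Option Bool)
    (μ : V → Option Bool) (I : Set V) (W : Set V)
    (σ' : V × V → Bool) (μ' : V → Bool) : Prop :=
  (∀ e s, σ e = some s → σ' e = s) ∧
  (∀ i s, μ i = some s → μ' i = s) ∧
  (∀ i ∈ W, i ∉ I → ∃ j, (j, i) ∈ E ∧ μ' i = signMul (μ' j) (σ' (j, i)))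

/-- The influence graph `(V, E, σ)` with inputs `I` and the partial vertex
labeling `μ` are consistent: there are witnessing labelings for all of `V`. -/
def Consistent {V : Type} (E : Set (V × V)) (σ : V × V → Option Bool)
    (μ : V → Option Bool) (I : Set V) : Prop :=
  ∃ σ' μ', Witnessing E σ μ I Set.univ σ' μ'

/-- `W` is a Minimal Inconsistent Core: there are no witnessing labelings for `W`,
but every proper subset of `W` has witnessing labelings. -/
def IsMIC {V : Type} (E : Set (V × V)) (σ : V × V → Option Bool)
    (μ : V → Option Bool) (I : Set V) (W : Set V) : Prop :=
  (¬ ∃ σ' μ', Witnessing E σ μ I W σ' μ') ∧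
  (∀ W', W' ⊂ W → ∃ σ' μ', Witnessing E σ μ I W' σ' μ')

/-- A disjunctive rule `(H, B⁺, B⁻)` over atoms `A`. -/
structure Rule (A : Type) where
  head : Set A
  pos : Set A
  neg : Set A

/-- `X` satisfies a rule: if `B⁺ ⊆ X` and `B⁻ ∩ X = ∅` then `H ∩ X ≠ ∅`. -/
def RuleSat {A : Type} (X : Set A) (r : Rule A) : Prop :=
  r.pos ⊆ X → r.neg ∩ X = ∅ → (r.head ∩ X).Nonempty

/-- The reduct of a program `P` relative to `X`. -/
def reduct {A : Type} (P : Set (Rule A)) (X : Set A) : Set (Rule A) :=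
  {r' | ∃ r ∈ P, r.neg ∩ X = ∅ ∧ r' = ⟨r.head, r.pos, ∅⟩}

/-- `X` is an answer set of `P`: `X` is a `⊆`-minimal set of atoms satisfying
every rule of the reduct `P^X`. -/
def IsAnswerSet {A : Type} (P : Set (Rule A)) (X : Set A) : Prop :=
  (∀ r ∈ reduct P X, RuleSat X r) ∧
  ∀ Y, Y ⊆ X → (∀ r ∈ reduct P X, RuleSat Y r) → Y = X

/-- A fact: a rule with a singleton head and empty body. -/
def fact {A : Type} (a : A) : Rule A := ⟨{a}, ∅, ∅⟩

/-- Ground atoms of the MIC-extraction encoding. -/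
inductive AtomD (V : Type) : Type
  | vertex : V → AtomD V
  | edge : V → V → AtomD V
  | observedE : V → V → Bool → AtomD V
  | observedV : V → Bool → AtomD V
  | input : V → AtomD V
  | labelV : V → Bool → AtomD V
  | labelE : V → V → Bool → AtomD V
  | active : V → AtomD V
  | inactive : V → AtomD V
  | edgeMIC : V → V → AtomD V
  | vertexMIC : V → AtomD V
  | opposite : V → V → AtomD V
  | bottom : AtomD V
  | labelV' : V → V → Bool → AtomD V
  | labelE' : V → V → V → Bool → AtomD V
  | receive' : V → V → Bool → AtomD V

/-- The instance translation `τ((V,E,σ),μ)`: facts describing the influence graph,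
the partial labelings, and the input vertices. -/
def tauD {V : Type} (E : Set (V × V)) (σ : V × V → Option Bool)
    (μ : V → Option Bool) (I : Set V) : Set (Rule (AtomD V)) :=
  {r | (∃ i : V, r = fact (AtomD.vertex i)) ∨
       (∃ j i, (j, i) ∈ E ∧ r = fact (AtomD.edge j i)) ∨
       (∃ j i s, (j, i) ∈ E ∧ σ (j, i) = some s ∧ r = fact (AtomD.observedE j i s)) ∨
       (∃ i s, μ i = some s ∧ r = fact (AtomD.observedV i s)) ∨
       (∃ i ∈ I, r = fact (AtomD.input i))}

/-- The MIC-extraction program `P_D` (ground instantiation over all vertices,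
edges, and signs). -/
def PD {V : Type} (E : Set (V × V)) : Set (Rule (AtomD V)) :=
  {r | (∃ v s, r = ⟨{AtomD.labelV v s}, {AtomD.observedV v s}, ∅⟩) ∨
       (∃ u v s, (u, v) ∈ E ∧ r = ⟨{AtomD.labelE u v s}, {AtomD.observedE u v s}, ∅⟩) ∨
       (∃ v : V, r = ⟨{AtomD.active v, AtomD.inactive v},
          {AtomD.vertex v}, {AtomD.input v}⟩) ∨
       (∃ u v, (u, v) ∈ E ∧ r = ⟨{AtomD.edgeMIC u v},
          {AtomD.edge u v, AtomD.active v}, ∅⟩) ∨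
       (∃ u v, (u, v) ∈ E ∧ r = ⟨{AtomD.vertexMIC u}, {AtomD.edgeMIC u v}, ∅⟩) ∨
       (∃ v : V, r = ⟨{AtomD.vertexMIC v}, {AtomD.active v}, ∅⟩) ∨
       (∃ v : V, r = ⟨{AtomD.labelV v true, AtomD.labelV v false},
          {AtomD.vertexMIC v}, ∅⟩) ∨
       (∃ u v, (u, v) ∈ E ∧ r = ⟨{AtomD.labelE u v true, AtomD.labelE u v false},
          {AtomD.edgeMIC u v}, ∅⟩) ∨
       (∃ u v s, (u, v) ∈ E ∧ r = ⟨{AtomD.opposite u v},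
          {AtomD.labelE u v false, AtomD.labelV u s, AtomD.labelV v s}, ∅⟩) ∨
       (∃ u v s t, (u, v) ∈ E ∧ s ≠ t ∧ r = ⟨{AtomD.opposite u v},
          {AtomD.labelE u v true, AtomD.labelV u s, AtomD.labelV v t}, ∅⟩) ∨
       (∃ v : V, r = ⟨{AtomD.bottom},
          insert (AtomD.active v) {a | ∃ u, (u, v) ∈ E ∧ a = AtomD.opposite u v}, ∅⟩) ∨
       (r = ⟨∅, ∅, {AtomD.bottom}⟩) ∨
       (∃ v s, r = ⟨{AtomD.labelV v s}, {AtomD.bottom, AtomD.vertex v}, ∅⟩) ∨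
       (∃ u v s, (u, v) ∈ E ∧ r = ⟨{AtomD.labelE u v s},
          {AtomD.bottom, AtomD.edge u v}, ∅⟩) ∨
       (∃ w v : V, r = ⟨{AtomD.labelV' w v true, AtomD.labelV' w v false},
          {AtomD.active w, AtomD.vertexMIC v}, ∅⟩) ∨
       (∃ w u v, (u, v) ∈ E ∧ r = ⟨{AtomD.labelE' w u v true, AtomD.labelE' w u v false},
          {AtomD.active w, AtomD.edgeMIC u v}, ∅⟩) ∨
       (∃ w v s, r = ⟨{AtomD.labelV' w v s}, {AtomD.active w, AtomD.observedV v s}, ∅⟩) ∨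
       (∃ w u v s, (u, v) ∈ E ∧ r = ⟨{AtomD.labelE' w u v s},
          {AtomD.active w, AtomD.observedE u v s}, ∅⟩) ∨
       (∃ w u v s, (u, v) ∈ E ∧ v ≠ w ∧ r = ⟨{AtomD.receive' w v true},
          {AtomD.labelE' w u v s, AtomD.labelV' w u s}, ∅⟩) ∨
       (∃ w u v s t, (u, v) ∈ E ∧ v ≠ w ∧ s ≠ t ∧ r = ⟨{AtomD.receive' w v false},
          {AtomD.labelE' w u v s, AtomD.labelV' w u t}, ∅⟩) ∨
       (∃ w v s, v ≠ w ∧ r = ⟨∅, {AtomD.labelV' w v s, AtomD.active v},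
          {AtomD.receive' w v s}⟩)}


section MICAux

lemma satAtom {A : Type} {P : Set (Rule A)} {X : Set A}
    (hX : ∀ r ∈ reduct P X, RuleSat X r)
    {r0 : Rule A} (hm : r0 ∈ P) (hneg : r0.neg ∩ X = ∅) (hpos : r0.pos ⊆ X) :
    (r0.head ∩ X).Nonempty := by
  have hr : (⟨r0.head, r0.pos, ∅⟩ : Rule A) ∈ reduct P X := ⟨r0, hm, hneg, rfl⟩
  exact hX ⟨r0.head, r0.pos, ∅⟩ hr hpos (by simp)

lemma support {A : Type} {P : Set (Rule A)} {X : Set A}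
    (hX : IsAnswerSet P X) {a : A} (ha : a ∈ X) :
    ∃ r0 ∈ P, r0.neg ∩ X = ∅ ∧ r0.pos ⊆ X \ {a} ∧ r0.head ∩ X = {a} := by
  by_contra h
  push_neg at h
  have hsat : ∀ r ∈ reduct P X, RuleSat (X \ {a}) r := by
    rintro r ⟨r0, hm, hneg, rfl⟩ hpos -
    by_contra hne
    rw [Set.not_nonempty_iff_eq_empty] at hne
    have hXr : (r0.head ∩ X).Nonempty := satAtom hX.1 hm hneg (hpos.trans Set.diff_subset)
    have hsub : r0.head ∩ X ⊆ {a} := by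
      intro b hb
      by_contra hba
      exact Set.eq_empty_iff_forall_notMem.mp hne b ⟨hb.1, hb.2, hba⟩
    have heq : r0.head ∩ X = {a} := by
      refine hsub.antisymm ?_
      obtain ⟨b, hb⟩ := hXr
      have hba : b = a := hsub hb
      intro c hc
      rw [Set.mem_singleton_iff] at hc
      subst hc
      rwa [hba] at hb
    exact h r0 hm hneg hpos heq
  have hYX : X \ {a} = X := hX.2 (X \ {a}) Set.diff_subset hsat
  have : a ∈ X \ {a} := hYX.symm ▸ ha
  exact this.2 rfl

end MICAux

lemma head_mem {A : Type} {X : Set A} {r0 : Rule A} {a : A}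
    (hhead : r0.head ∩ X = {a}) : a ∈ r0.head := by
  have : a ∈ r0.head ∩ X := by rw [hhead]; rfl
  exact this.1


/-- Characterization of the possible supporting rules for an atom in an
answer set of `PD ∪ tauD`. -/
inductive SuppInfo {V : Type} (E : Set (V × V)) (σ : V × V → Option Bool)
    (μ : V → Option Bool) (X : Set (AtomD V)) : AtomD V → Prop
  | labelV (v s) : SuppInfo E σ μ X (AtomD.labelV v s)
  | labelE (u v s) : SuppInfo E σ μ X (AtomD.labelE u v s)
  | active (v) (h : AtomD.input v ∉ X) : SuppInfo E σ μ X (AtomD.active v)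
  | inactive (v) : SuppInfo E σ μ X (AtomD.inactive v)
  | edgeMIC (u v) : SuppInfo E σ μ X (AtomD.edgeMIC u v)
  | vertexMIC (v) : SuppInfo E σ μ X (AtomD.vertexMIC v)
  | opposite (u v) : SuppInfo E σ μ X (AtomD.opposite u v)
  | bottom : SuppInfo E σ μ X AtomD.bottom
  | lv'choice (w v s) (h : AtomD.labelV' w v (!s) ∉ X) :
      SuppInfo E σ μ X (AtomD.labelV' w v s)
  | lv'obs (w v s) (h : AtomD.observedV v s ∈ X) :
      SuppInfo E σ μ X (AtomD.labelV' w v s)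
  | le'choice (w u v s) (h : AtomD.labelE' w u v (!s) ∉ X) :
      SuppInfo E σ μ X (AtomD.labelE' w u v s)
  | le'obs (w u v s) (h : AtomD.observedE u v s ∈ X) :
      SuppInfo E σ μ X (AtomD.labelE' w u v s)
  | recvT (w u v t) (hE : (u, v) ∈ E) (hvw : v ≠ w)
      (h1 : AtomD.labelE' w u v t ∈ X) (h2 : AtomD.labelV' w u t ∈ X) :
      SuppInfo E σ μ X (AtomD.receive' w v true)
  | recvF (w u v t t') (hE : (u, v) ∈ E) (hvw : v ≠ w) (hne : t ≠ t')
      (h1 : AtomD.labelE' w u v t ∈ X) (h2 : AtomD.labelV' w u t' ∈ X) :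
      SuppInfo E σ μ X (AtomD.receive' w v false)
  | obsV (v s) (h : μ v = some s) : SuppInfo E σ μ X (AtomD.observedV v s)
  | obsE (u v s) (h : σ (u, v) = some s) : SuppInfo E σ μ X (AtomD.observedE u v s)
  | vertex (v) : SuppInfo E σ μ X (AtomD.vertex v)
  | edge (u v) : SuppInfo E σ μ X (AtomD.edge u v)
  | input (v) : SuppInfo E σ μ X (AtomD.input v)

lemma supp_cases {V : Type} {E : Set (V × V)} {σ : V × V → Option Bool}
    {μ : V → Option Bool} {I : Set V} {X : Set (AtomD V)}
    (hX : IsAnswerSet (PD E ∪ tauD E σ μ I) X) {x : AtomD V} (hx : x ∈ X) :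
    SuppInfo E σ μ X x := by
  obtain ⟨r0, hm, hneg, hpos, hhead⟩ := support hX hx
  have hina := head_mem hhead
  rcases hm with hm | hm
  · simp only [PD, Set.mem_setOf_eq] at hm
    rcases hm with ⟨a,b,rfl⟩|⟨a,b,c,hE,rfl⟩|⟨a,rfl⟩|⟨a,b,hE,rfl⟩|⟨a,b,hE,rfl⟩|⟨a,rfl⟩|⟨a,rfl⟩|⟨a,b,hE,rfl⟩|⟨a,b,c,hE,rfl⟩|⟨a,b,c,d,hE,hne,rfl⟩|⟨a,rfl⟩|rfl|⟨a,b,rfl⟩|⟨a,b,c,hE,rfl⟩|⟨a,b,rfl⟩|⟨a,b,c,hE,rfl⟩|⟨a,b,c,rfl⟩|⟨a,b,c,d,hE,rfl⟩|⟨a,b,c,d,hE,hne,rfl⟩|⟨a,b,c,d,e,hE,hne,hst,rfl⟩|⟨a,b,c,hne,rfl⟩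
    -- D1
    · obtain rfl := Set.mem_singleton_iff.mp hina
      exact .labelV a b
    -- D2
    · obtain rfl := Set.mem_singleton_iff.mp hina
      exact .labelE a b c
    -- D3
    · have hneg' : ({AtomD.input a} : Set (AtomD V)) ∩ X = ∅ := hneg
      have hni : AtomD.input a ∉ X := by
        intro hc
        exact Set.eq_empty_iff_forall_notMem.mp hneg' _ ⟨rfl, hc⟩
      rcases Set.mem_insert_iff.mp hina with rfl | h
      · exact .active a hni
      · obtain rfl := Set.mem_singleton_iff.mp h
        exact .inactive a
    -- D4
    · obtain rfl := Set.mem_singleton_iff.mp hina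
      exact .edgeMIC a b
    -- D5
    · obtain rfl := Set.mem_singleton_iff.mp hina
      exact .vertexMIC a
    -- D6
    · obtain rfl := Set.mem_singleton_iff.mp hina
      exact .vertexMIC a
    -- D7
    · rcases Set.mem_insert_iff.mp hina with rfl | h
      · exact .labelV a true
      · obtain rfl := Set.mem_singleton_iff.mp h
        exact .labelV a false
    -- D8
    · rcases Set.mem_insert_iff.mp hina with rfl | h
      · exact .labelE a b true
      · obtain rfl := Set.mem_singleton_iff.mp h
        exact .labelE a b false
    -- D9
    · obtain rfl := Set.mem_singleton_iff.mp hina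
      exact .opposite a b
    -- D10
    · obtain rfl := Set.mem_singleton_iff.mp hina
      exact .opposite a b
    -- D11
    · obtain rfl := Set.mem_singleton_iff.mp hina
      exact .bottom
    -- D12
    · exfalso
      have hhead' : (∅ : Set (AtomD V)) ∩ X = {x} := hhead
      rw [Set.empty_inter] at hhead'
      exact Set.singleton_ne_empty _ hhead'.symm
    -- D13
    · obtain rfl := Set.mem_singleton_iff.mp hina
      exact .labelV a b
    -- D14
    · obtain rfl := Set.mem_singleton_iff.mp hina
      exact .labelE a b c
    -- D15
    · rcases Set.mem_insert_iff.mp hina with rfl | h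
      · refine .lv'choice a b true ?_
        intro hc
        have hhead' : ({AtomD.labelV' a b true, AtomD.labelV' a b false} : Set (AtomD V)) ∩ X
            = {AtomD.labelV' a b true} := hhead
        have hmem : AtomD.labelV' a b false ∈ ({AtomD.labelV' a b true, AtomD.labelV' a b false} : Set (AtomD V)) ∩ X :=
          ⟨Set.mem_insert_of_mem _ rfl, hc⟩
        rw [hhead'] at hmem
        simp at hmem
      · obtain rfl := Set.mem_singleton_iff.mp h
        refine .lv'choice a b false ?_
        intro hc
        have hhead' : ({AtomD.labelV' a b true, AtomD.labelV' a b false} : Set (AtomD V)) ∩ X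
            = {AtomD.labelV' a b false} := hhead
        have hmem : AtomD.labelV' a b true ∈ ({AtomD.labelV' a b true, AtomD.labelV' a b false} : Set (AtomD V)) ∩ X := ⟨Set.mem_insert _ _, hc⟩
        rw [hhead'] at hmem
        simp at hmem
    -- D16
    · rcases Set.mem_insert_iff.mp hina with rfl | h
      · refine .le'choice a b c true ?_
        intro hc
        have hhead' : ({AtomD.labelE' a b c true, AtomD.labelE' a b c false} : Set (AtomD V)) ∩ X
            = {AtomD.labelE' a b c true} := hhead
        have hmem : AtomD.labelE' a b c false ∈ ({AtomD.labelE' a b c true, AtomD.labelE' a b c false} : Set (AtomD V)) ∩ X :=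
          ⟨Set.mem_insert_of_mem _ rfl, hc⟩
        rw [hhead'] at hmem
        simp at hmem
      · obtain rfl := Set.mem_singleton_iff.mp h
        refine .le'choice a b c false ?_
        intro hc
        have hhead' : ({AtomD.labelE' a b c true, AtomD.labelE' a b c false} : Set (AtomD V)) ∩ X
            = {AtomD.labelE' a b c false} := hhead
        have hmem : AtomD.labelE' a b c true ∈ ({AtomD.labelE' a b c true, AtomD.labelE' a b c false} : Set (AtomD V)) ∩ X := ⟨Set.mem_insert _ _, hc⟩
        rw [hhead'] at hmem
        simp at hmem
    -- D17
    · obtain rfl := Set.mem_singleton_iff.mp hina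
      exact .lv'obs a b c (hpos (Set.mem_insert_of_mem _ rfl)).1
    -- D18
    · obtain rfl := Set.mem_singleton_iff.mp hina
      exact .le'obs a b c d (hpos (Set.mem_insert_of_mem _ rfl)).1
    -- D19
    · obtain rfl := Set.mem_singleton_iff.mp hina
      exact .recvT a b c d hE hne (hpos (Set.mem_insert _ _)).1
        (hpos (Set.mem_insert_of_mem _ rfl)).1
    -- D20
    · obtain rfl := Set.mem_singleton_iff.mp hina
      exact .recvF a b c d e hE hne hst (hpos (Set.mem_insert _ _)).1
        (hpos (Set.mem_insert_of_mem _ rfl)).1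
    -- D21
    · exfalso
      have hhead' : (∅ : Set (AtomD V)) ∩ X = {x} := hhead
      rw [Set.empty_inter] at hhead'
      exact Set.singleton_ne_empty _ hhead'.symm
  · simp only [tauD, Set.mem_setOf_eq] at hm
    rcases hm with ⟨a,rfl⟩|⟨a,b,hE,rfl⟩|⟨a,b,c,hE,hs,rfl⟩|⟨a,b,hs,rfl⟩|⟨a,ha,rfl⟩
    · obtain rfl := Set.mem_singleton_iff.mp hina
      exact .vertex a
    · obtain rfl := Set.mem_singleton_iff.mp hina
      exact .edge a b
    · obtain rfl := Set.mem_singleton_iff.mp hina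
      exact .obsE a b c hs
    · obtain rfl := Set.mem_singleton_iff.mp hina
      exact .obsV a b hs
    · obtain rfl := Set.mem_singleton_iff.mp hina
      exact .input a


section MICDer

variable {V : Type} {E : Set (V × V)} {σ : V × V → Option Bool}
  {μ : V → Option Bool} {I : Set V} {X : Set (AtomD V)}

lemma satSingle (hX : IsAnswerSet (PD E ∪ tauD E σ μ I) X) {a : AtomD V}
    {p n : Set (AtomD V)} (hm : (⟨{a}, p, n⟩ : Rule (AtomD V)) ∈ PD E ∪ tauD E σ μ I)
    (hn : n ∩ X = ∅) (hp : p ⊆ X) : a ∈ X := by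
  obtain ⟨b, hb1, hb2⟩ := satAtom hX.1 hm hn hp
  obtain rfl := Set.mem_singleton_iff.mp hb1
  exact hb2

lemma satEmpty (hX : IsAnswerSet (PD E ∪ tauD E σ μ I) X)
    {p n : Set (AtomD V)} (hm : (⟨∅, p, n⟩ : Rule (AtomD V)) ∈ PD E ∪ tauD E σ μ I)
    (hn : n ∩ X = ∅) : ¬ p ⊆ X := by
  intro hp
  obtain ⟨b, hb1, _⟩ := satAtom hX.1 hm hn hp
  exact hb1

lemma obsV_spec (hX : IsAnswerSet (PD E ∪ tauD E σ μ I) X) {v : V} {s : Bool}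
    (h : AtomD.observedV v s ∈ X) : μ v = some s := by
  cases supp_cases hX h with
  | obsV _ _ h => exact h

lemma obsE_spec (hX : IsAnswerSet (PD E ∪ tauD E σ μ I) X) {u v : V} {s : Bool}
    (h : AtomD.observedE u v s ∈ X) : σ (u, v) = some s := by
  cases supp_cases hX h with
  | obsE _ _ _ h => exact h

lemma mem_vertex (hX : IsAnswerSet (PD E ∪ tauD E σ μ I) X) (i : V) :
    AtomD.vertex i ∈ X :=
  satSingle hX (Set.mem_union_right _ (Or.inl ⟨i, rfl⟩)) (Set.empty_inter X) (Set.empty_subset X)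

lemma mem_edge (hX : IsAnswerSet (PD E ∪ tauD E σ μ I) X) {j i : V}
    (hE : (j, i) ∈ E) : AtomD.edge j i ∈ X :=
  satSingle hX (Set.mem_union_right _ (Or.inr (Or.inl ⟨j, i, hE, rfl⟩))) (Set.empty_inter X) (Set.empty_subset X)

lemma mem_observedE (hX : IsAnswerSet (PD E ∪ tauD E σ μ I) X) {j i : V} {s : Bool}
    (hE : (j, i) ∈ E) (hs : σ (j, i) = some s) : AtomD.observedE j i s ∈ X :=
  satSingle hX (Set.mem_union_right _ (Or.inr (Or.inr (Or.inl ⟨j, i, s, hE, hs, rfl⟩)))) (Set.empty_inter X) (Set.empty_subset X)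

lemma mem_observedV (hX : IsAnswerSet (PD E ∪ tauD E σ μ I) X) {i : V} {s : Bool}
    (hs : μ i = some s) : AtomD.observedV i s ∈ X :=
  satSingle hX (Set.mem_union_right _ (Or.inr (Or.inr (Or.inr (Or.inl ⟨i, s, hs, rfl⟩))))) (Set.empty_inter X) (Set.empty_subset X)

lemma mem_input (hX : IsAnswerSet (PD E ∪ tauD E σ μ I) X) {i : V}
    (hi : i ∈ I) : AtomD.input i ∈ X :=
  satSingle hX (Set.mem_union_right _ (Or.inr (Or.inr (Or.inr (Or.inr ⟨i, hi, rfl⟩))))) (Set.empty_inter X) (Set.empty_subset X)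

lemma mem_bottom (hX : IsAnswerSet (PD E ∪ tauD E σ μ I) X) :
    AtomD.bottom ∈ X := by
  by_contra hb
  exact satEmpty hX (Set.mem_union_left _ (Or.inr (Or.inr (Or.inr (Or.inr (Or.inr (Or.inr (Or.inr (Or.inr (Or.inr (Or.inr (Or.inr (Or.inl rfl))))))))))))) (Set.singleton_inter_eq_empty.mpr hb) (Set.empty_subset X)

lemma mem_labelV (hX : IsAnswerSet (PD E ∪ tauD E σ μ I) X) (v : V) (s : Bool) :
    AtomD.labelV v s ∈ X :=
  satSingle hX (Set.mem_union_left _ (Or.inr (Or.inr (Or.inr (Or.inr (Or.inr (Or.inr (Or.inr (Or.inr (Or.inr (Or.inr (Or.inr (Or.inr (Or.inl ⟨v, s, rfl⟩)))))))))))))) (Set.empty_inter X)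
    (by rw [Set.insert_subset_iff, Set.singleton_subset_iff]
        exact ⟨mem_bottom hX, mem_vertex hX v⟩)

lemma mem_labelE (hX : IsAnswerSet (PD E ∪ tauD E σ μ I) X) {u v : V} (s : Bool)
    (hE : (u, v) ∈ E) : AtomD.labelE u v s ∈ X :=
  satSingle hX (Set.mem_union_left _ (Or.inr (Or.inr (Or.inr (Or.inr (Or.inr (Or.inr (Or.inr (Or.inr (Or.inr (Or.inr (Or.inr (Or.inr (Or.inr (Or.inl ⟨u, v, s, hE, rfl⟩))))))))))))))) (Set.empty_inter X)
    (by rw [Set.insert_subset_iff, Set.singleton_subset_iff]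
        exact ⟨mem_bottom hX, mem_edge hX hE⟩)

lemma mem_opposite (hX : IsAnswerSet (PD E ∪ tauD E σ μ I) X) {u v : V}
    (hE : (u, v) ∈ E) : AtomD.opposite u v ∈ X :=
  satSingle hX (Set.mem_union_left _ (Or.inr (Or.inr (Or.inr (Or.inr (Or.inr (Or.inr (Or.inr (Or.inr (Or.inl ⟨u, v, true, hE, rfl⟩)))))))))) (Set.empty_inter X)
    (by rw [Set.insert_subset_iff, Set.insert_subset_iff, Set.singleton_subset_iff]
        exact ⟨mem_labelE hX false hE, mem_labelV hX u true, mem_labelV hX v true⟩)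

lemma active_not_input (hX : IsAnswerSet (PD E ∪ tauD E σ μ I) X) {v : V}
    (h : AtomD.active v ∈ X) : v ∉ I := by
  intro hv
  cases supp_cases hX h with
  | active _ hni => exact hni (mem_input hX hv)

lemma mem_vertexMIC (hX : IsAnswerSet (PD E ∪ tauD E σ μ I) X) {v : V}
    (h : AtomD.active v ∈ X) : AtomD.vertexMIC v ∈ X :=
  satSingle hX (Set.mem_union_left _ (Or.inr (Or.inr (Or.inr (Or.inr (Or.inr (Or.inl ⟨v, rfl⟩))))))) (Set.empty_inter X) (Set.singleton_subset_iff.mpr h)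

lemma lv'_unique (hX : IsAnswerSet (PD E ∪ tauD E σ μ I) X) {w v : V}
    (h1 : AtomD.labelV' w v true ∈ X) (h2 : AtomD.labelV' w v false ∈ X) : False := by
  have c1 := supp_cases hX h1
  have c2 := supp_cases hX h2
  cases c1 with
  | lv'choice _ _ _ hno => exact hno h2
  | lv'obs _ _ _ ho1 =>
    cases c2 with
    | lv'choice _ _ _ hno => exact hno h1
    | lv'obs _ _ _ ho2 =>
      have e1 := obsV_spec hX ho1
      have e2 := obsV_spec hX ho2
      rw [e1] at e2
      simp at e2

lemma le'_unique (hX : IsAnswerSet (PD E ∪ tauD E σ μ I) X) {w u v : V}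
    (h1 : AtomD.labelE' w u v true ∈ X) (h2 : AtomD.labelE' w u v false ∈ X) : False := by
  have c1 := supp_cases hX h1
  have c2 := supp_cases hX h2
  cases c1 with
  | le'choice _ _ _ _ hno => exact hno h2
  | le'obs _ _ _ _ ho1 =>
    cases c2 with
    | le'choice _ _ _ _ hno => exact hno h1
    | le'obs _ _ _ _ ho2 =>
      have e1 := obsE_spec hX ho1
      have e2 := obsE_spec hX ho2
      rw [e1] at e2
      simp at e2

lemma lv'_of_obs (hX : IsAnswerSet (PD E ∪ tauD E σ μ I) X) {w v : V} {s : Bool}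
    (hw : AtomD.active w ∈ X) (hs : μ v = some s) : AtomD.labelV' w v s ∈ X :=
  satSingle hX (Set.mem_union_left _ (Or.inr (Or.inr (Or.inr (Or.inr (Or.inr (Or.inr (Or.inr (Or.inr (Or.inr (Or.inr (Or.inr (Or.inr (Or.inr (Or.inr (Or.inr (Or.inr (Or.inl ⟨w, v, s, rfl⟩)))))))))))))))))) (Set.empty_inter X)
    (by rw [Set.insert_subset_iff, Set.singleton_subset_iff]
        exact ⟨hw, mem_observedV hX hs⟩)

lemma le'_of_obs (hX : IsAnswerSet (PD E ∪ tauD E σ μ I) X) {w u v : V} {s : Bool}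
    (hw : AtomD.active w ∈ X) (hE : (u, v) ∈ E) (hs : σ (u, v) = some s) :
    AtomD.labelE' w u v s ∈ X :=
  satSingle hX (Set.mem_union_left _ (Or.inr (Or.inr (Or.inr (Or.inr (Or.inr (Or.inr (Or.inr (Or.inr (Or.inr (Or.inr (Or.inr (Or.inr (Or.inr (Or.inr (Or.inr (Or.inr (Or.inr (Or.inl ⟨w, u, v, s, hE, rfl⟩))))))))))))))))))) (Set.empty_inter X)
    (by rw [Set.insert_subset_iff, Set.singleton_subset_iff]
        exact ⟨hw, mem_observedE hX hE hs⟩)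

lemma lv'_exists (hX : IsAnswerSet (PD E ∪ tauD E σ μ I) X) {w v : V}
    (hw : AtomD.active w ∈ X) (hv : AtomD.active v ∈ X) :
    ∃ s, AtomD.labelV' w v s ∈ X := by
  obtain ⟨b, hb1, hb2⟩ := satAtom hX.1 (Set.mem_union_left _ (Or.inr (Or.inr (Or.inr (Or.inr (Or.inr (Or.inr (Or.inr (Or.inr (Or.inr (Or.inr (Or.inr (Or.inr (Or.inr (Or.inr (Or.inl ⟨w, v, rfl⟩)))))))))))))))) (Set.empty_inter X)
    (by rw [Set.insert_subset_iff, Set.singleton_subset_iff]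
        exact ⟨hw, mem_vertexMIC hX hv⟩)
  rcases Set.mem_insert_iff.mp hb1 with rfl | hb1
  · exact ⟨true, hb2⟩
  · obtain rfl := Set.mem_singleton_iff.mp hb1
    exact ⟨false, hb2⟩

lemma recv_forced (hX : IsAnswerSet (PD E ∪ tauD E σ μ I) X) {w v : V} {s : Bool}
    (hvw : v ≠ w) (hlv : AtomD.labelV' w v s ∈ X) (hv : AtomD.active v ∈ X) :
    AtomD.receive' w v s ∈ X := by
  by_contra hr
  exact satEmpty hX (Set.mem_union_left _ (Or.inr (Or.inr (Or.inr (Or.inr (Or.inr (Or.inr (Or.inr (Or.inr (Or.inr (Or.inr (Or.inr (Or.inr (Or.inr (Or.inr (Or.inr (Or.inr (Or.inr (Or.inr (Or.inr (Or.inr ⟨w, v, s, hvw, rfl⟩))))))))))))))))))))) (Set.singleton_inter_eq_empty.mpr hr)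
    (by rw [Set.insert_subset_iff, Set.singleton_subset_iff]
        exact ⟨hlv, hv⟩)

end MICDer


open Classical in
/-- Vertex labeling extracted from the primed atoms for context `w`. -/
noncomputable def muW {V : Type} (X : Set (AtomD V)) (w : V) (v : V) : Bool :=
  if AtomD.labelV' w v true ∈ X then true else false

open Classical in
/-- Edge labeling extracted from the primed atoms for context `w`. -/
noncomputable def sigW {V : Type} (X : Set (AtomD V)) (w : V) (e : V × V) : Bool :=
  if AtomD.labelE' w e.1 e.2 true ∈ X then true else false

section MICB

variable {V : Type} {E : Set (V × V)} {σ : V × V → Option Bool}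
  {μ : V → Option Bool} {I : Set V} {X : Set (AtomD V)}

lemma muW_spec (hX : IsAnswerSet (PD E ∪ tauD E σ μ I) X) {w v : V} {s : Bool}
    (h : AtomD.labelV' w v s ∈ X) : muW X w v = s := by
  cases s
  · exact if_neg (fun hc => (lv'_unique hX hc h).elim)
  · exact if_pos h

lemma sigW_spec (hX : IsAnswerSet (PD E ∪ tauD E σ μ I) X) {w u v : V} {s : Bool}
    (h : AtomD.labelE' w u v s ∈ X) : sigW X w (u, v) = s := by
  cases s
  · exact if_neg (fun hc => (le'_unique hX hc h).elim)
  · exact if_pos h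

lemma witness_mono {W W' : Set V} {σ' : V × V → Bool} {μ' : V → Bool}
    (hsub : W' ⊆ W) (h : Witnessing E σ μ I W σ' μ') :
    Witnessing E σ μ I W' σ' μ' :=
  ⟨h.1, h.2.1, fun i hi => h.2.2 i (hsub hi)⟩

lemma partB (hX : IsAnswerSet (PD E ∪ tauD E σ μ I) X)
    (hσ : ∀ e, σ e ≠ none → e ∈ E) {w : V} (hw : AtomD.active w ∈ X) :
    Witnessing E σ μ I {i | AtomD.active i ∈ X ∧ i ≠ w} (sigW X w) (muW X w) := by
  refine ⟨?_, ?_, ?_⟩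
  · intro e s hs
    have hE : e ∈ E := hσ e (by rw [hs]; simp)
    obtain ⟨u, v⟩ := e
    exact sigW_spec hX (le'_of_obs hX hw hE hs)
  · intro i s hs
    exact muW_spec hX (lv'_of_obs hX hw hs)
  · rintro i ⟨hi, hiw⟩ -
    obtain ⟨s₀, hs₀⟩ := lv'_exists hX hw hi
    have hr := recv_forced hX hiw hs₀ hi
    cases s₀
    · cases supp_cases hX hr with
      | recvF _ u _ t t' hE hvw hne h1 h2 =>
        refine ⟨u, hE, ?_⟩
        rw [muW_spec hX hs₀, muW_spec hX h2, sigW_spec hX h1]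
        cases t <;> cases t' <;> simp_all [signMul]
    · cases supp_cases hX hr with
      | recvT _ u _ t hE hvw h1 h2 =>
        refine ⟨u, hE, ?_⟩
        rw [muW_spec hX hs₀, muW_spec hX h2, sigW_spec hX h1]
        cases t <;> rfl

end MICB


/-- Atoms to be removed from `X` to build a smaller model when witnessing
labelings `σ'`, `μ'` exist. -/
def BadA {V : Type} (σ' : V × V → Bool) (μ' : V → Bool) : AtomD V → Prop
  | .bottom => True
  | .labelV v s => s ≠ μ' v
  | .labelE u v s => s ≠ σ' (u, v)
  | .opposite u v => μ' v = signMul (μ' u) (σ' (u, v))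
  | _ => False

section MICA

variable {V : Type} {E : Set (V × V)} {σ : V × V → Option Bool}
  {μ : V → Option Bool} {I : Set V} {X : Set (AtomD V)}

lemma partA (hX : IsAnswerSet (PD E ∪ tauD E σ μ I) X) :
    ¬ ∃ σ' μ', Witnessing E σ μ I {i | AtomD.active i ∈ X} σ' μ' := by
  rintro ⟨σ', μ', hw1, hw2, hw3⟩
  set Y := X \ {a | BadA σ' μ' a} with hYdef
  have hYsub : Y ⊆ X := Set.diff_subset
  have hYsat : ∀ r ∈ reduct (PD E ∪ tauD E σ μ I) X, RuleSat Y r := by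
    rintro r ⟨r0, hm, hneg, rfl⟩
    have hsatX : RuleSat X ⟨r0.head, r0.pos, ∅⟩ := hX.1 _ ⟨r0, hm, hneg, rfl⟩
    rintro hpos -
    rcases hm with hm | hm
    · simp only [PD, Set.mem_setOf_eq] at hm
      rcases hm with ⟨a,b,rfl⟩|⟨a,b,c,hE,rfl⟩|⟨a,rfl⟩|⟨a,b,hE,rfl⟩|⟨a,b,hE,rfl⟩|⟨a,rfl⟩|⟨a,rfl⟩|⟨a,b,hE,rfl⟩|⟨a,b,c,hE,rfl⟩|⟨a,b,c,d,hE,hne,rfl⟩|⟨a,rfl⟩|rfl|⟨a,b,rfl⟩|⟨a,b,c,hE,rfl⟩|⟨a,b,rfl⟩|⟨a,b,c,hE,rfl⟩|⟨a,b,c,rfl⟩|⟨a,b,c,d,hE,rfl⟩|⟨a,b,c,d,hE,hne,rfl⟩|⟨a,b,c,d,e,hE,hne,hst,rfl⟩|⟨a,b,c,hne,rfl⟩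
      -- D1 : labelV a b ← observedV a b
      · have hobs : AtomD.observedV a b ∈ X := (hpos rfl).1
        have hb : μ' a = b := hw2 a b (obsV_spec hX hobs)
        exact ⟨AtomD.labelV a b, rfl, mem_labelV hX a b, by simp [BadA, hb]⟩
      -- D2 : labelE a b c ← observedE a b c
      · have hobs : AtomD.observedE a b c ∈ X := (hpos rfl).1
        have hc : σ' (a, b) = c := hw1 (a, b) c (obsE_spec hX hobs)
        exact ⟨AtomD.labelE a b c, rfl, mem_labelE hX c hE, by simp [BadA, hc]⟩
      -- D3 : active a ; inactive a
      · obtain ⟨x, hx1, hx2⟩ := hsatX (hpos.trans hYsub) (Set.empty_inter X)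
        refine ⟨x, hx1, hx2, ?_⟩
        rcases Set.mem_insert_iff.mp hx1 with rfl | hx1
        · simp [BadA]
        · obtain rfl := Set.mem_singleton_iff.mp hx1
          simp [BadA]
      -- D4 : edgeMIC
      · obtain ⟨x, hx1, hx2⟩ := hsatX (hpos.trans hYsub) (Set.empty_inter X)
        obtain rfl := Set.mem_singleton_iff.mp hx1
        exact ⟨_, rfl, hx2, by simp [BadA]⟩
      -- D5 : vertexMIC ← edgeMIC
      · obtain ⟨x, hx1, hx2⟩ := hsatX (hpos.trans hYsub) (Set.empty_inter X)
        obtain rfl := Set.mem_singleton_iff.mp hx1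
        exact ⟨_, rfl, hx2, by simp [BadA]⟩
      -- D6 : vertexMIC ← active
      · obtain ⟨x, hx1, hx2⟩ := hsatX (hpos.trans hYsub) (Set.empty_inter X)
        obtain rfl := Set.mem_singleton_iff.mp hx1
        exact ⟨_, rfl, hx2, by simp [BadA]⟩
      -- D7 : labelV choice
      · refine ⟨AtomD.labelV a (μ' a), ?_, mem_labelV hX a (μ' a), by simp [BadA]⟩
        cases μ' a
        · exact Set.mem_insert_of_mem _ rfl
        · exact Set.mem_insert _ _
      -- D8 : labelE choice
      · refine ⟨AtomD.labelE a b (σ' (a, b)), ?_, mem_labelE hX _ hE, by simp [BadA]⟩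
        cases σ' (a, b)
        · exact Set.mem_insert_of_mem _ rfl
        · exact Set.mem_insert _ _
      -- D9 : opposite ← labelE false, labelV u s, labelV v s
      · have h1 := hpos (Set.mem_insert _ _)
        have h2 := hpos (Set.mem_insert_of_mem _ (Set.mem_insert _ _))
        have h3 := hpos (Set.mem_insert_of_mem _ (Set.mem_insert_of_mem _ rfl))
        have e1 : σ' (a, b) = false := by
          have := h1.2; simp [BadA] at this; exact this
        have e2 : μ' a = c := by
          have := h2.2; simp [BadA] at this; exact this.symm
        have e3 : μ' b = c := by
          have := h3.2; simp [BadA] at this; exact this.symm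
        refine ⟨AtomD.opposite a b, rfl, mem_opposite hX hE, ?_⟩
        intro hbad
        have hbad' : μ' b = signMul (μ' a) (σ' (a, b)) := hbad
        rw [e1, e2, e3] at hbad'
        cases c <;> simp [signMul] at hbad'
      -- D10 : opposite ← labelE true, labelV u s, labelV v t
      · have h1 := hpos (Set.mem_insert _ _)
        have h2 := hpos (Set.mem_insert_of_mem _ (Set.mem_insert _ _))
        have h3 := hpos (Set.mem_insert_of_mem _ (Set.mem_insert_of_mem _ rfl))
        have e1 : σ' (a, b) = true := by
          have := h1.2; simp [BadA] at this; exact this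
        have e2 : μ' a = c := by
          have := h2.2; simp [BadA] at this; exact this.symm
        have e3 : μ' b = d := by
          have := h3.2; simp [BadA] at this; exact this.symm
        refine ⟨AtomD.opposite a b, rfl, mem_opposite hX hE, ?_⟩
        intro hbad
        have hbad' : μ' b = signMul (μ' a) (σ' (a, b)) := hbad
        rw [e1, e2, e3] at hbad'
        cases c <;> cases d <;> simp [signMul] at hbad' <;> simp_all
      -- D11 : bottom ← active a, opposite(·, a)
      · exfalso
        have hact := hpos (Set.mem_insert _ _)
        have haX : AtomD.active a ∈ X := hact.1
        obtain ⟨j, hjE, hsig⟩ := hw3 a haX (active_not_input hX haX)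
        have hopp := hpos (Set.mem_insert_of_mem _ ⟨j, hjE, rfl⟩)
        exact hopp.2 hsig
      -- D12 : ← not bottom
      · exfalso
        have hneg' : ({AtomD.bottom} : Set (AtomD V)) ∩ X = ∅ := hneg
        exact Set.eq_empty_iff_forall_notMem.mp hneg' _ ⟨rfl, mem_bottom hX⟩
      -- D13 : labelV ← bottom, vertex
      · exact absurd trivial (hpos (Set.mem_insert _ _)).2
      -- D14 : labelE ← bottom, edge
      · exact absurd trivial (hpos (Set.mem_insert _ _)).2
      -- D15 : labelV' choice
      · obtain ⟨x, hx1, hx2⟩ := hsatX (hpos.trans hYsub) (Set.empty_inter X)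
        refine ⟨x, hx1, hx2, ?_⟩
        rcases Set.mem_insert_iff.mp hx1 with rfl | hx1
        · simp [BadA]
        · obtain rfl := Set.mem_singleton_iff.mp hx1
          simp [BadA]
      -- D16 : labelE' choice
      · obtain ⟨x, hx1, hx2⟩ := hsatX (hpos.trans hYsub) (Set.empty_inter X)
        refine ⟨x, hx1, hx2, ?_⟩
        rcases Set.mem_insert_iff.mp hx1 with rfl | hx1
        · simp [BadA]
        · obtain rfl := Set.mem_singleton_iff.mp hx1
          simp [BadA]
      -- D17
      · obtain ⟨x, hx1, hx2⟩ := hsatX (hpos.trans hYsub) (Set.empty_inter X)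
        obtain rfl := Set.mem_singleton_iff.mp hx1
        exact ⟨_, rfl, hx2, by simp [BadA]⟩
      -- D18
      · obtain ⟨x, hx1, hx2⟩ := hsatX (hpos.trans hYsub) (Set.empty_inter X)
        obtain rfl := Set.mem_singleton_iff.mp hx1
        exact ⟨_, rfl, hx2, by simp [BadA]⟩
      -- D19
      · obtain ⟨x, hx1, hx2⟩ := hsatX (hpos.trans hYsub) (Set.empty_inter X)
        obtain rfl := Set.mem_singleton_iff.mp hx1
        exact ⟨_, rfl, hx2, by simp [BadA]⟩
      -- D20
      · obtain ⟨x, hx1, hx2⟩ := hsatX (hpos.trans hYsub) (Set.empty_inter X)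
        obtain rfl := Set.mem_singleton_iff.mp hx1
        exact ⟨_, rfl, hx2, by simp [BadA]⟩
      -- D21 : constraint with empty head
      · exfalso
        obtain ⟨x, hx1, _⟩ := hsatX (hpos.trans hYsub) (Set.empty_inter X)
        exact hx1
    · simp only [tauD, Set.mem_setOf_eq] at hm
      rcases hm with ⟨a,rfl⟩|⟨a,b,hE,rfl⟩|⟨a,b,c,hE,hs,rfl⟩|⟨a,b,hs,rfl⟩|⟨a,ha,rfl⟩ <;>
      · obtain ⟨x, hx1, hx2⟩ := hsatX (hpos.trans hYsub) (Set.empty_inter X)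
        obtain rfl := Set.mem_singleton_iff.mp hx1
        exact ⟨_, rfl, hx2, by simp [BadA]⟩
  have hYX : Y = X := hX.2 Y hYsub hYsat
  have hb : AtomD.bottom ∈ Y := hYX.symm ▸ mem_bottom hX
  exact hb.2 trivial

end MICA

/-- Soundness of the MIC-extraction encoding: if `X` is an answer set of
`P_D ∪ τ((V,E,σ),μ)`, then `{i | active(i) ∈ X}` is a Minimal Inconsistent Core. -/
theorem mic_soundness {V : Type} [Fintype V]
    (E : Set (V × V)) (σ : V × V → Option Bool) (μ : V → Option Bool) (I : Set V)
    (hσ : ∀ e, σ e ≠ none → e ∈ E)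
    (X : Set (AtomD V)) (hX : IsAnswerSet (PD E ∪ tauD E σ μ I) X) :
    IsMIC E σ μ I {i | AtomD.active i ∈ X} := by
  constructor
  · exact partA hX
  · intro W' hW'
    obtain ⟨w, hwW, hwW'⟩ := Set.exists_of_ssubset hW'
    refine ⟨sigW X w, muW X w, witness_mono ?_ (partB hX hσ hwW)⟩
    intro i hi
    exact ⟨hW'.subset hi, fun h => hwW' (h ▸ hi)⟩
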